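/- Let Σ be positive definite, D nonnegative diagonal with ((M+1)/M)Σ - D ⪰ 0, and define P as the M-fold vertical stack of I - DΣ⁻¹ and V the block matrix with diagonal blocks C = 2D - DΣ⁻¹D and off-diagonal blocks C - D. If Z ~ N(0, Σ) and E ~ N(0, V) is independent of Z, then the joint vector (Z, PZ + E) is Gaussian with covariance matrix whose (0,0)-block is Σ, whose (0,m)-blocks are Σ - D for m ≥ 1, whose (m,m)-blocks are Σ for m ≥ 1, and whose (m,m')-blocks are Σ - D for 1 ≤ m ≠ m' ≤ M. -/

import Mathlib

open MeasureTheory ProbabilityTheory Matrix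

/-- A family `X : ι → Ω → ℝ` is a centered Gaussian vector with covariance matrix `S` if every
linear combination `∑ i, a i * X i` has law `N(0, aᵀSa)`. -/
def IsCenteredGaussianWithCov {Ω ι : Type*} [MeasurableSpace Ω] [Fintype ι]
    (μ : Measure Ω) (X : ι → Ω → ℝ) (S : Matrix ι ι ℝ) : Prop :=
  ∀ a : ι → ℝ, Measure.map (fun ω => ∑ i, a i * X i ω) μ =
    gaussianReal 0 (Real.toNNReal (∑ i, ∑ j, a i * S i j * a j))

section GhostAux
open Real
open scoped NNReal ENNReal

lemma quadSum {n : Type*} [Fintype n] (A : Matrix n n ℝ) (x y : n → ℝ) :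
    ∑ i, ∑ j, x i * A i j * y j = x ⬝ᵥ A *ᵥ y := by
  simp [dotProduct, Matrix.mulVec, Finset.mul_sum, mul_assoc]

lemma blockQuad {ι κ : Type*} [Fintype ι] [Fintype κ] [DecidableEq ι]
    (A B : Matrix κ κ ℝ) (c : ι × κ → ℝ)
    (V : Matrix (ι × κ) (ι × κ) ℝ)
    (hV : ∀ m m' i j, V (m, i) (m', j) = if m = m' then A i j else B i j) :
    ∑ u, ∑ v, c u * V u v * c v
      = (∑ i, ∑ j, (∑ m, c (m, i)) * B i j * (∑ m, c (m, j)))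
        + ∑ m, ∑ i, ∑ j, c (m, i) * (A - B) i j * c (m, j) := by
  simp only [Fintype.sum_prod_type]
  have hsplit : ∀ (m m' : ι) (i j : κ), c (m, i) * V (m, i) (m', j) * c (m', j)
      = c (m, i) * B i j * c (m', j)
        + (if m = m' then c (m, i) * (A - B) i j * c (m, j) else 0) := by
    intro m m' i j
    rw [hV]
    by_cases h : m = m'
    · subst h; simp [Matrix.sub_apply]; ring
    · simp [h]
  simp only [hsplit, Finset.sum_add_distrib]
  congr 1
  · -- product-of-sums part
    rw [Finset.sum_comm]
    refine Finset.sum_congr rfl fun i _ => ?_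
    -- ⊢ ∑ m, ∑ m', ∑ j, c (m,i) * B i j * c (m',j) = ∑ j, (∑ m, c (m,i)) * B i j * (∑ m, c (m,j))
    rw [Finset.sum_comm]
    -- ∑ m', ∑ m, ∑ j
    have h1 : ∀ m' : ι, ∑ m, ∑ j, c (m, i) * B i j * c (m', j)
        = ∑ j, (∑ m, c (m, i)) * B i j * c (m', j) := by
      intro m'
      rw [Finset.sum_comm]
      exact Finset.sum_congr rfl fun j _ => by rw [Finset.sum_mul, Finset.sum_mul]
    simp only [h1]
    rw [Finset.sum_comm]
    exact Finset.sum_congr rfl fun j _ => (Finset.mul_sum _ _ _).symm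
  · -- diagonal part
    refine Finset.sum_congr rfl fun m _ => Finset.sum_congr rfl fun i _ => ?_
    rw [Finset.sum_comm]
    exact Finset.sum_congr rfl fun j _ => by simp

lemma gaussianPDFReal_conv {v1 v2 : ℝ≥0} (h1 : v1 ≠ 0) (h2 : v2 ≠ 0) (z : ℝ) :
    ∫ x : ℝ, gaussianPDFReal 0 v1 x * gaussianPDFReal 0 v2 (z - x)
      = gaussianPDFReal 0 (v1 + v2) z := by
  have ha : (0:ℝ) < v1 := lt_of_le_of_ne (v1.coe_nonneg) (by exact_mod_cast (Ne.symm h1))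
  have hb : (0:ℝ) < v2 := lt_of_le_of_ne (v2.coe_nonneg) (by exact_mod_cast (Ne.symm h2))
  set a : ℝ := (v1:ℝ) with hav
  set b : ℝ := (v2:ℝ) with hbv
  have hab : (0:ℝ) < a + b := by linarith
  have hπ := pi_pos
  -- completing the square
  have key : ∀ x : ℝ, gaussianPDFReal 0 v1 x * gaussianPDFReal 0 v2 (z - x)
      = ((√(2*π*a))⁻¹ * (√(2*π*b))⁻¹ * rexp (-(z^2) / (2*(a+b))))
        * rexp (-((a+b)/(2*a*b)) * (x - a*z/(a+b))^2) := by
    intro x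
    simp only [gaussianPDFReal, sub_zero, NNReal.coe_mk]
    rw [show ((v1:ℝ)) = a from rfl, show ((v2:ℝ)) = b from rfl]
    rw [mul_mul_mul_comm, ← Real.exp_add]
    have harg : -x^2/(2*a) + -(z-x)^2/(2*b)
        = -z^2/(2*(a+b)) + -((a+b)/(2*a*b))*(x - a*z/(a+b))^2 := by
      field_simp
      ring
    rw [harg, Real.exp_add]
    ring
  have hc : (0:ℝ) < (a+b)/(2*a*b) := by positivity
  simp only [key]
  rw [MeasureTheory.integral_const_mul,
    integral_sub_right_eq_self (μ := volume) (fun x => rexp (-((a+b)/(2*a*b)) * x^2)) (a*z/(a+b)),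
    integral_gaussian]
  have hrad : (√(2*π*a))⁻¹ * (√(2*π*b))⁻¹ * √(π/((a+b)/(2*a*b))) = (√(2*π*(a+b)))⁻¹ := by
    rw [← Real.sqrt_inv, ← Real.sqrt_inv, ← Real.sqrt_mul (by positivity),
      ← Real.sqrt_mul (by positivity), ← Real.sqrt_inv]
    congr 1
    field_simp
  have : gaussianPDFReal 0 (v1+v2) z = (√(2*π*(a+b)))⁻¹ * rexp (-(z^2) / (2*(a+b))) := by
    simp only [gaussianPDFReal, sub_zero, NNReal.coe_add]
    rfl
  rw [this, ← hrad]
  ring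

lemma gaussianPDF_conv {v1 v2 : ℝ≥0} (h1 : v1 ≠ 0) (h2 : v2 ≠ 0) (z : ℝ) :
    ∫⁻ x : ℝ, gaussianPDF 0 v1 x * gaussianPDF 0 v2 (z - x)
      = gaussianPDF 0 (v1 + v2) z := by
  have hint : Integrable (fun x : ℝ => gaussianPDFReal 0 v1 x * gaussianPDFReal 0 v2 (z - x)) := by
    have : Integrable (fun x : ℝ => gaussianPDFReal 0 v2 (z - x) * gaussianPDFReal 0 v1 x) := by
      refine (integrable_gaussianPDFReal 0 v1).bdd_mul
        (((measurable_gaussianPDFReal 0 v2).comp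
          (measurable_const.sub measurable_id)).aestronglyMeasurable)
        (c := (√(2 * Real.pi * v2))⁻¹) (Filter.Eventually.of_forall fun x => ?_)
      rw [Real.norm_eq_abs, abs_of_nonneg (gaussianPDFReal_nonneg 0 v2 _)]
      simp only [gaussianPDFReal, sub_zero]
      have : rexp (- (z - x)^2 / (2 * v2)) ≤ 1 := by
        apply Real.exp_le_one_iff.2
        apply div_nonpos_of_nonpos_of_nonneg
        · simpa using sq_nonneg (z - x)
        · positivity
      calc (√(2 * Real.pi * v2))⁻¹ * rexp (- (z - x)^2 / (2 * v2))
          ≤ (√(2 * Real.pi * v2))⁻¹ * 1 := by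
            apply mul_le_mul_of_nonneg_left this (by positivity)
        _ = (√(2 * Real.pi * v2))⁻¹ := mul_one _
    simpa [mul_comm] using this
  simp only [gaussianPDF]
  rw [lintegral_congr (fun x => (ENNReal.ofReal_mul (gaussianPDFReal_nonneg 0 v1 x)).symm),
    ← MeasureTheory.ofReal_integral_eq_lintegral_ofReal hint
      (Filter.Eventually.of_forall fun x =>
        mul_nonneg (gaussianPDFReal_nonneg 0 v1 x) (gaussianPDFReal_nonneg 0 v2 _)),
    gaussianPDFReal_conv h1 h2]

lemma gaussianReal_prod_add (v1 v2 : ℝ≥0) :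
    Measure.map (fun q : ℝ × ℝ => q.1 + q.2) ((gaussianReal 0 v1).prod (gaussianReal 0 v2))
      = gaussianReal 0 (v1 + v2) := by
  by_cases h1 : v1 = 0
  · subst h1
    rw [gaussianReal_zero_var, MeasureTheory.Measure.dirac_prod,
      Measure.map_map measurable_add measurable_prodMk_left]
    simp [Function.comp_def]
  by_cases h2 : v2 = 0
  · subst h2
    rw [gaussianReal_zero_var, MeasureTheory.Measure.prod_dirac,
      Measure.map_map measurable_add
        measurable_prodMk_right]
    simp [Function.comp_def]
  have hpdf2 : Measurable (Function.uncurry fun x z : ℝ => gaussianPDF 0 v2 (z - x)) :=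
    (measurable_gaussianPDF 0 v2).comp (measurable_snd.sub measurable_fst)
  ext s hs
  rw [Measure.map_apply measurable_add hs,
    Measure.prod_apply (measurable_add hs)]
  have hx : ∀ x : ℝ, (gaussianReal 0 v2) (Prod.mk x ⁻¹' ((fun q : ℝ × ℝ => q.1 + q.2) ⁻¹' s))
      = ∫⁻ z in s, gaussianPDF 0 v2 (z - x) := by
    intro x
    have hpre : Prod.mk x ⁻¹' ((fun q : ℝ × ℝ => q.1 + q.2) ⁻¹' s) = (fun y => x + y) ⁻¹' s := rfl
    have hps : MeasurableSet ((fun y => x + y) ⁻¹' s) := (measurable_const_add x) hs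
    rw [hpre, gaussianReal_of_var_ne_zero 0 h2, withDensity_apply _ hps]
    have := (measurePreserving_add_left (volume : Measure ℝ) x).setLIntegral_comp_preimage hs
      (f := fun z => gaussianPDF 0 v2 (z - x)) ((measurable_gaussianPDF 0 v2).comp
        (measurable_id.sub measurable_const))
    rw [← this]
    congr 1 with y
    simp
  simp_rw [hx]
  rw [gaussianReal_of_var_ne_zero 0 h1,
    lintegral_withDensity_eq_lintegral_mul _ (measurable_gaussianPDF 0 v1)
      (Measurable.lintegral_prod_right hpdf2)]
  simp only [Pi.mul_apply]
  have swap : ∫⁻ x, gaussianPDF 0 v1 x * ∫⁻ z in s, gaussianPDF 0 v2 (z - x)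
      = ∫⁻ z in s, ∫⁻ x, gaussianPDF 0 v1 x * gaussianPDF 0 v2 (z - x) := by
    rw [← MeasureTheory.lintegral_lintegral_swap]
    · congr 1 with x
      rw [lintegral_const_mul' (gaussianPDF 0 v1 x) _ (by simp [gaussianPDF])]
    · exact (((measurable_gaussianPDF 0 v1).comp measurable_fst).mul
        ((measurable_gaussianPDF 0 v2).comp (measurable_snd.sub measurable_fst))).aemeasurable
  rw [swap]
  simp_rw [gaussianPDF_conv h1 h2]
  rw [gaussianReal_of_var_ne_zero 0 (by simp [h1]), withDensity_apply _ hs]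

lemma indep_gaussian_add {Ω : Type*} [MeasurableSpace Ω] (μ : Measure Ω) [IsProbabilityMeasure μ]
    {X Y : Ω → ℝ} (hXm : Measurable X) (hYm : Measurable Y) {v1 v2 : ℝ≥0}
    (hX : μ.map X = gaussianReal 0 v1) (hY : μ.map Y = gaussianReal 0 v2)
    (h : IndepFun X Y μ) :
    μ.map (fun ω => X ω + Y ω) = gaussianReal 0 (v1 + v2) := by
  have hmap : μ.map (fun ω => (X ω, Y ω)) = (μ.map X).prod (μ.map Y) :=
    (indepFun_iff_map_prod_eq_prod_map_map hXm.aemeasurable hYm.aemeasurable).mp h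
  have : μ.map (fun ω => X ω + Y ω)
      = Measure.map (fun q : ℝ × ℝ => q.1 + q.2) (μ.map fun ω => (X ω, Y ω)) := by
    rw [Measure.map_map measurable_add (hXm.prodMk hYm)]
    rfl
  rw [this, hmap, hX, hY, gaussianReal_prod_add]

lemma key_psd {p : ℕ} (S : Matrix (Fin p) (Fin p) ℝ) (hS : S.PosDef)
    (s : Fin p → ℝ) (hs : ∀ j, 0 ≤ s j) (k : ℝ) (hk : 0 < k)
    (hcon : (k • S - Matrix.diagonal s).PosSemidef) (x : Fin p → ℝ) :
    x ⬝ᵥ (Matrix.diagonal s * S⁻¹ * Matrix.diagonal s) *ᵥ x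
      ≤ k * ∑ j, s j * x j ^ 2 := by
  have hdet : IsUnit S.det := isUnit_iff_ne_zero.mpr hS.det_pos.ne'
  set D := Matrix.diagonal s with hDdef
  set z := S⁻¹ *ᵥ (D *ᵥ x) with hz
  have hSz : S *ᵥ z = D *ᵥ x := by
    rw [hz, Matrix.mulVec_mulVec, Matrix.mul_nonsing_inv _ hdet, Matrix.one_mulVec]
  set q := ∑ j, s j * z j * x j with hq
  have hlhs : x ⬝ᵥ (D * S⁻¹ * D) *ᵥ x = q := by
    rw [← Matrix.mulVec_mulVec, ← Matrix.mulVec_mulVec, ← hz]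
    simp only [dotProduct, Matrix.mulVec_diagonal, hDdef]
    exact Finset.sum_congr rfl fun j _ => by ring
  have hzSz : z ⬝ᵥ S *ᵥ z = q := by
    rw [hSz]
    simp only [dotProduct, Matrix.mulVec_diagonal, hDdef]
    exact Finset.sum_congr rfl fun j _ => by ring
  have hzDz : z ⬝ᵥ D *ᵥ z = ∑ j, s j * z j ^ 2 := by
    simp only [dotProduct, Matrix.mulVec_diagonal, hDdef]
    exact Finset.sum_congr rfl fun j _ => by ring
  have hcon' : ∑ j, s j * z j ^ 2 ≤ k * q := by
    have h0 := hcon.dotProduct_mulVec_nonneg z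
    simp only [star_trivial] at h0
    rw [Matrix.sub_mulVec, Matrix.smul_mulVec, dotProduct_sub, dotProduct_smul,
      smul_eq_mul, hzSz, hzDz] at h0
    linarith
  have hamgm : ∀ j, 2 * k * (s j * z j * x j) ≤ s j * z j ^ 2 + k ^ 2 * (s j * x j ^ 2) := by
    intro j
    nlinarith [mul_nonneg (hs j) (sq_nonneg (z j - k * x j))]
  have hsum : 2 * k * q ≤ (∑ j, s j * z j ^ 2) + k ^ 2 * ∑ j, s j * x j ^ 2 := by
    calc 2 * k * q = ∑ j, 2 * k * (s j * z j * x j) := by rw [hq, Finset.mul_sum]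
      _ ≤ ∑ j, (s j * z j ^ 2 + k ^ 2 * (s j * x j ^ 2)) :=
          Finset.sum_le_sum fun j _ => hamgm j
      _ = _ := by rw [Finset.sum_add_distrib, Finset.mul_sum]
  rw [hlhs]
  have hkq : k * q ≤ k * (k * ∑ j, s j * x j ^ 2) := by nlinarith
  exact le_of_mul_le_mul_left (by nlinarith) hk

end GhostAux

set_option maxHeartbeats 1000000

/-- GhostKnockoff joint Gaussian structure: if `Z ~ N(0, Σ)`, `E ~ N(0, V)` independent of
`Z`, with `V` the block matrix with diagonal blocks `C = 2D - DΣ⁻¹D` and off-diagonal blocks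
`C - D`, and `P` the `M`-fold vertical stack of `I - DΣ⁻¹`, then the joint vector
`(Z, PZ + E)` is centered Gaussian with covariance having `(0,0)`-block `Σ`, all `(m,m)`-blocks
`Σ` and all blocks between distinct copies equal to `Σ - D`. -/
theorem ghostknockoff_joint_gaussian {Ω : Type*} [MeasurableSpace Ω] (μ : Measure Ω)
    [IsProbabilityMeasure μ] (p M : ℕ) (hM : 1 ≤ M)
    (S : Matrix (Fin p) (Fin p) ℝ) (hS : S.PosDef)
    (s : Fin p → ℝ) (hs : ∀ j, 0 ≤ s j)
    (D : Matrix (Fin p) (Fin p) ℝ) (hD : D = Matrix.diagonal s)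
    (hconstraint : ((((M : ℝ) + 1) / (M : ℝ)) • S - D).PosSemidef)
    (C : Matrix (Fin p) (Fin p) ℝ) (hC : C = 2 • D - D * S⁻¹ * D)
    (Z : Fin p → Ω → ℝ) (hZmeas : ∀ j, Measurable (Z j))
    (hZ : IsCenteredGaussianWithCov μ Z S)
    (V : Matrix (Fin M × Fin p) (Fin M × Fin p) ℝ)
    (hVblocks : ∀ m m' : Fin M, ∀ i j : Fin p,
      V (m, i) (m', j) = if m = m' then C i j else (C - D) i j)
    (E : Fin M × Fin p → Ω → ℝ) (hEmeas : ∀ q, Measurable (E q))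
    (hE : IsCenteredGaussianWithCov μ E V)
    (hIndep : IndepFun (fun ω => fun j : Fin p => Z j ω)
      (fun ω => fun q : Fin M × Fin p => E q ω) μ)
    (W : Fin (M + 1) × Fin p → Ω → ℝ)
    (hW0 : ∀ j ω, W (0, j) ω = Z j ω)
    (hWm : ∀ (m : Fin M) (j : Fin p) (ω : Ω),
      W (m.succ, j) ω = (∑ i, ((1 : Matrix (Fin p) (Fin p) ℝ) - D * S⁻¹) j i * Z i ω)
        + E (m, j) ω)
    (G : Matrix (Fin (M + 1) × Fin p) (Fin (M + 1) × Fin p) ℝ)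
    (hG : ∀ m m' : Fin (M + 1), ∀ i j : Fin p,
      G (m, i) (m', j) = if m = m' then S i j else (S - D) i j) :
    IsCenteredGaussianWithCov μ W G := by
  intro a
  -- matrix facts
  have hdet : IsUnit S.det := isUnit_iff_ne_zero.mpr hS.det_pos.ne'
  have hSinv : S * S⁻¹ = 1 := Matrix.mul_nonsing_inv _ hdet
  have hinvS : S⁻¹ * S = 1 := Matrix.nonsing_inv_mul _ hdet
  have hSsym : Sᵀ = S := by
    ext i j
    simpa using congrFun (congrFun hS.1 i) j
  have hDsym : Dᵀ = D := by rw [hD, Matrix.diagonal_transpose]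
  have hSinvSym : S⁻¹ᵀ = S⁻¹ := by rw [Matrix.transpose_nonsing_inv, hSsym]
  set P : Matrix (Fin p) (Fin p) ℝ := 1 - D * S⁻¹ with hPdef
  have hPT : Pᵀ = 1 - S⁻¹ * D := by
    rw [hPdef, Matrix.transpose_sub, Matrix.transpose_one, Matrix.transpose_mul, hDsym, hSinvSym]
  have M1 : S * Pᵀ = S - D := by
    rw [hPT, Matrix.mul_sub, Matrix.mul_one, ← Matrix.mul_assoc, hSinv, Matrix.one_mul]
  have M2 : P * S = S - D := by
    rw [hPdef, Matrix.sub_mul, Matrix.one_mul, Matrix.mul_assoc, hinvS, Matrix.mul_one]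
  have hPD : P * D = D - D * S⁻¹ * D := by rw [hPdef, Matrix.sub_mul, Matrix.one_mul]
  have M3 : P * (S - D) + (C - D) = S - D := by
    rw [Matrix.mul_sub, M2, hPD, hC]; abel
  have hCD : C - D = D - D * S⁻¹ * D := by rw [hC]; abel
  -- vectors
  set a0 : Fin p → ℝ := fun j => a (0, j) with ha0def
  set cc : Fin M × Fin p → ℝ := fun q => a (q.1.succ, q.2) with hccdef
  set t : Fin p → ℝ := fun j => ∑ m : Fin M, cc (m, j) with htdef
  set b : Fin p → ℝ := fun i => a0 i + (t ᵥ* P) i with hbdef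
  have hbv : b = a0 + t ᵥ* P := funext fun i => rfl
  -- decomposition of the linear combination
  have hfun : (fun ω => ∑ q, a q * W q ω)
      = fun ω => (∑ i, b i * Z i ω) + (∑ q, cc q * E q ω) := by
    funext ω
    rw [Fintype.sum_prod_type, Fin.sum_univ_succ]
    simp only [hW0, hWm]
    have hmid : ∑ m : Fin M, ∑ j, a ((m : Fin M).succ, j) * ((∑ i, P j i * Z i ω) + E (m, j) ω)
        = (∑ i, (t ᵥ* P) i * Z i ω) + ∑ q : Fin M × Fin p, cc q * E q ω := by
      simp only [mul_add, Finset.sum_add_distrib]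
      congr 1
      · calc ∑ m : Fin M, ∑ j, a ((m : Fin M).succ, j) * ∑ i, P j i * Z i ω
            = ∑ j, ∑ m : Fin M, cc (m, j) * ∑ i, P j i * Z i ω := Finset.sum_comm
          _ = ∑ j, t j * ∑ i, P j i * Z i ω := by
              refine Finset.sum_congr rfl fun j _ => ?_
              rw [htdef, Finset.sum_mul]
          _ = ∑ j, ∑ i, t j * P j i * Z i ω := by
              refine Finset.sum_congr rfl fun j _ => ?_
              rw [Finset.mul_sum]
              exact Finset.sum_congr rfl fun i _ => by ring
          _ = ∑ i, ∑ j, t j * P j i * Z i ω := Finset.sum_comm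
          _ = ∑ i, (t ᵥ* P) i * Z i ω := by
              refine Finset.sum_congr rfl fun i _ => ?_
              rw [Matrix.vecMul, dotProduct, Finset.sum_mul]
      · exact (Fintype.sum_prod_type (fun q : Fin M × Fin p => cc q * E q ω)).symm
    rw [hmid]
    simp only [hbv, Pi.add_apply, add_mul, Finset.sum_add_distrib]
    ring
  -- covariance computations
  have hu1 : (t ᵥ* P) ⬝ᵥ S *ᵥ a0 = t ⬝ᵥ (S - D) *ᵥ a0 := by
    rw [← Matrix.dotProduct_mulVec t P (S *ᵥ a0), Matrix.mulVec_mulVec, M2]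
  have hu2 : a0 ⬝ᵥ S *ᵥ (t ᵥ* P) = a0 ⬝ᵥ (S - D) *ᵥ t := by
    rw [← Matrix.mulVec_transpose P t, Matrix.mulVec_mulVec, M1]
  have hu3 : (t ᵥ* P) ⬝ᵥ S *ᵥ (t ᵥ* P) = t ⬝ᵥ (P * (S - D)) *ᵥ t := by
    have e1 : S *ᵥ (t ᵥ* P) = (S - D) *ᵥ t := by
      rw [← Matrix.mulVec_transpose P t, Matrix.mulVec_mulVec, M1]
    rw [e1, ← Matrix.dotProduct_mulVec t P ((S - D) *ᵥ t), Matrix.mulVec_mulVec]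
  have hvb : ∑ i, ∑ j, b i * S i j * b j
      = a0 ⬝ᵥ S *ᵥ a0 + a0 ⬝ᵥ (S - D) *ᵥ t + t ⬝ᵥ (S - D) *ᵥ a0
        + t ⬝ᵥ (P * (S - D)) *ᵥ t := by
    rw [quadSum, hbv, Matrix.mulVec_add, dotProduct_add, add_dotProduct, add_dotProduct,
      hu1, hu2, hu3]
    ring
  have hvc : ∑ u, ∑ v, cc u * V u v * cc v
      = t ⬝ᵥ (C - D) *ᵥ t + ∑ m : Fin M, (fun j => cc (m, j)) ⬝ᵥ D *ᵥ (fun j => cc (m, j)) := by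
    rw [blockQuad C (C - D) cc V hVblocks, sub_sub_cancel]
    congr 1
    · rw [quadSum]
    · exact Finset.sum_congr rfl fun m _ => by rw [quadSum]
  have hvG : ∑ u, ∑ v, a u * G u v * a v
      = (a0 + t) ⬝ᵥ (S - D) *ᵥ (a0 + t)
        + (a0 ⬝ᵥ D *ᵥ a0 + ∑ m : Fin M, (fun j => cc (m, j)) ⬝ᵥ D *ᵥ (fun j => cc (m, j))) := by
    rw [blockQuad S (S - D) a G hG, sub_sub_cancel]
    congr 1
    · rw [quadSum]
      have hta : (fun i => ∑ m : Fin (M + 1), a (m, i)) = a0 + t := by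
        funext i
        rw [Fin.sum_univ_succ]
        rfl
      rw [hta]
    · rw [Fin.sum_univ_succ]
      congr 1
      · rw [quadSum]
      · exact Finset.sum_congr rfl fun m _ => by rw [quadSum]
  -- the covariance identity
  have hident : (∑ i, ∑ j, b i * S i j * b j) + (∑ u, ∑ v, cc u * V u v * cc v)
      = ∑ u, ∑ v, a u * G u v * a v := by
    rw [hvb, hvc, hvG]
    have hPSD : t ⬝ᵥ (P * (S - D)) *ᵥ t + t ⬝ᵥ (C - D) *ᵥ t = t ⬝ᵥ (S - D) *ᵥ t := by
      rw [← dotProduct_add, ← Matrix.add_mulVec, M3]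
    have hexp : (a0 + t) ⬝ᵥ (S - D) *ᵥ (a0 + t)
        = a0 ⬝ᵥ (S - D) *ᵥ a0 + a0 ⬝ᵥ (S - D) *ᵥ t + t ⬝ᵥ (S - D) *ᵥ a0
          + t ⬝ᵥ (S - D) *ᵥ t := by
      rw [Matrix.mulVec_add, dotProduct_add, add_dotProduct, add_dotProduct]
      ring
    have hsplitS : a0 ⬝ᵥ S *ᵥ a0 = a0 ⬝ᵥ (S - D) *ᵥ a0 + a0 ⬝ᵥ D *ᵥ a0 := by
      rw [Matrix.sub_mulVec, dotProduct_sub]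
      ring
    rw [hexp, hsplitS]
    linarith [hPSD]
  -- nonnegativity of the two variances
  have hvbpos : 0 ≤ ∑ i, ∑ j, b i * S i j * b j := by
    rw [quadSum]
    simpa using hS.posSemidef.dotProduct_mulVec_nonneg b
  have hDdot : ∀ x : Fin p → ℝ, x ⬝ᵥ D *ᵥ x = ∑ j, s j * x j ^ 2 := by
    intro x
    simp only [hD, dotProduct, Matrix.mulVec_diagonal]
    exact Finset.sum_congr rfl fun j _ => by ring
  have hMpos : (0 : ℝ) < M := by exact_mod_cast Nat.lt_of_lt_of_le Nat.zero_lt_one hM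
  have hkpos : (0 : ℝ) < ((M : ℝ) + 1) / M := by positivity
  have hvcpos : 0 ≤ ∑ u, ∑ v, cc u * V u v * cc v := by
    rw [hvc]
    set k : ℝ := ((M : ℝ) + 1) / M with hkdef
    have hcon' : (k • S - Matrix.diagonal s).PosSemidef := by rwa [hD] at hconstraint
    have hkey : t ⬝ᵥ (Matrix.diagonal s * S⁻¹ * Matrix.diagonal s) *ᵥ t
        ≤ k * ∑ j, s j * t j ^ 2 := key_psd S hS s hs k hkpos hcon' t
    set T : ℝ := ∑ j, s j * t j ^ 2 with hTdef
    set R : ℝ := ∑ m : Fin M, ∑ j, s j * cc (m, j) ^ 2 with hRdef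
    have hq' : t ⬝ᵥ (D * S⁻¹ * D) *ᵥ t ≤ k * T := by rwa [hD]
    have hvc2 : t ⬝ᵥ (C - D) *ᵥ t = T - t ⬝ᵥ (D * S⁻¹ * D) *ᵥ t := by
      rw [hCD, Matrix.sub_mulVec, dotProduct_sub, hDdot t]
    have hsumD : ∑ m : Fin M, (fun j => cc (m, j)) ⬝ᵥ D *ᵥ (fun j => cc (m, j)) = R := by
      exact Finset.sum_congr rfl fun m _ => hDdot _
    have hT0 : 0 ≤ T := Finset.sum_nonneg fun j _ => mul_nonneg (hs j) (sq_nonneg _)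
    have hR0 : 0 ≤ R := Finset.sum_nonneg fun m _ =>
      Finset.sum_nonneg fun j _ => mul_nonneg (hs j) (sq_nonneg _)
    have hTR : T ≤ M * R := by
      have hcs : ∀ j, s j * t j ^ 2 ≤ s j * ((M : ℝ) * ∑ m : Fin M, cc (m, j) ^ 2) := by
        intro j
        refine mul_le_mul_of_nonneg_left ?_ (hs j)
        have := sq_sum_le_card_mul_sum_sq (s := (Finset.univ : Finset (Fin M)))
          (f := fun m => cc (m, j))
        simpa [htdef] using this
      calc T ≤ ∑ j, s j * ((M : ℝ) * ∑ m : Fin M, cc (m, j) ^ 2) :=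
            Finset.sum_le_sum fun j _ => hcs j
        _ = ∑ j, (M : ℝ) * ∑ m : Fin M, s j * cc (m, j) ^ 2 := by
            refine Finset.sum_congr rfl fun j _ => ?_
            simp only [Finset.mul_sum]
            exact Finset.sum_congr rfl fun m _ => by ring
        _ = (M : ℝ) * ∑ j, ∑ m : Fin M, s j * cc (m, j) ^ 2 := (Finset.mul_sum _ _ _).symm
        _ = (M : ℝ) * R := by rw [hRdef]; congr 1; exact Finset.sum_comm
    have hMk : (M : ℝ) * k = (M : ℝ) + 1 := by
      rw [hkdef]; field_simp
    rw [hvc2, hsumD]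
    have hMq : (M : ℝ) * (t ⬝ᵥ (D * S⁻¹ * D) *ᵥ t) ≤ ((M : ℝ) + 1) * T := by
      calc (M : ℝ) * (t ⬝ᵥ (D * S⁻¹ * D) *ᵥ t) ≤ (M : ℝ) * (k * T) :=
            mul_le_mul_of_nonneg_left hq' hMpos.le
        _ = ((M : ℝ) * k) * T := by ring
        _ = ((M : ℝ) + 1) * T := by rw [hMk]
    have hfin : 0 ≤ (M : ℝ) * (T - t ⬝ᵥ (D * S⁻¹ * D) *ᵥ t + R) := by
      have hexpand : (M : ℝ) * (T - t ⬝ᵥ (D * S⁻¹ * D) *ᵥ t + R)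
          = (M : ℝ) * T - (M : ℝ) * (t ⬝ᵥ (D * S⁻¹ * D) *ᵥ t) + (M : ℝ) * R := by ring
      rw [hexpand]
      linarith
    have := le_of_mul_le_mul_left (by linarith : (M : ℝ) * 0 ≤ (M : ℝ) * (T - t ⬝ᵥ (D * S⁻¹ * D) *ᵥ t + R)) hMpos
    linarith
  -- assemble the law
  have hXm : Measurable fun ω => ∑ i, b i * Z i ω :=
    Finset.measurable_sum _ fun i _ => (hZmeas i).const_mul (b i)
  have hYm : Measurable fun ω => ∑ q, cc q * E q ω :=
    Finset.measurable_sum _ fun q _ => (hEmeas q).const_mul (cc q)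
  have hindepXY : IndepFun (fun ω => ∑ i, b i * Z i ω) (fun ω => ∑ q, cc q * E q ω) μ := by
    have h1 : Measurable (fun f : Fin p → ℝ => ∑ i, b i * f i) :=
      Finset.measurable_sum _ fun i _ => (measurable_pi_apply i).const_mul _
    have h2 : Measurable (fun f : Fin M × Fin p → ℝ => ∑ q, cc q * f q) :=
      Finset.measurable_sum _ fun q _ => (measurable_pi_apply q).const_mul _
    exact hIndep.comp h1 h2
  have hsum := indep_gaussian_add μ hXm hYm (hZ b) (hE cc) hindepXY
  rw [hfun, hsum, ← Real.toNNReal_add hvbpos hvcpos, hident]
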